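/- Let n > 2k with k ≥ 2. Set μ = (k, k−1, 1^{n−2k}) and ν = (k, k, 1^{n−2k−1}), partitions of n−1, and regard the Young subgroups S_{μ'} and S_ν of S_{n−1} as subgroups of S_n via the standard embedding fixing n. Then in the skein module V(n,k,0): the group algebra element [S_{μ'}]_− does not annihilate π₁ (indeed [S_{μ'}]_− · π₁ = 2^{k−2}(n−2k+2)! · π₁ ≠ 0) and the group algebra element [S_ν]_+ does not annihilate π₀. -/

import Mathlib

namespace SkeinNC

/-- A set partition of `Fin n` (as an equivalence relation / setoid) is *noncrossing*
if whenever `a < b < c < d` with `a ~ c` and `b ~ d`, all four lie in one block. -/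
def IsNC {n : ℕ} (π : Setoid (Fin n)) : Prop :=
  ∀ a b c d : Fin n, a < b → b < c → c < d → π.r a c → π.r b d → π.r a b

/-- The set partition `w(π)`: `w i` and `w j` are blockmates in `w(π)` iff
`i` and `j` are blockmates in `π`. -/
def permSP {n : ℕ} (w : Equiv.Perm (Fin n)) (π : Setoid (Fin n)) : Setoid (Fin n) :=
  Setoid.comap w.symm π

/-- The block of `π` containing `i`. -/
def block {n : ℕ} (π : Setoid (Fin n)) (i : Fin n) : Set (Fin n) := {j | π.r i j}

/-- The number of blocks of a set partition. -/
noncomputable def numBlocks {n : ℕ} (π : Setoid (Fin n)) : ℕ := Nat.card (Quotient π)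

/-- The number of singleton blocks of a set partition. -/
noncomputable def numSingletons {n : ℕ} (π : Setoid (Fin n)) : ℕ :=
  Nat.card {i : Fin n // block π i = {i}}

/-- Replace the union `S` (a union of blocks of `π`) by the two blocks `S ∩ C` and `S \ C`,
keeping all blocks outside `S` unchanged. -/
def replaceTwo {n : ℕ} (π : Setoid (Fin n)) (S C : Set (Fin n)) : Setoid (Fin n) where
  r x y := (x ∉ S ∧ y ∉ S ∧ π.r x y) ∨ (x ∈ S ∧ y ∈ S ∧ (x ∈ C ↔ y ∈ C))
  iseqv := by
    constructor
    · intro x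
      by_cases hx : x ∈ S
      · exact Or.inr ⟨hx, hx, Iff.rfl⟩
      · exact Or.inl ⟨hx, hx, π.refl x⟩
    · rintro x y (⟨hx, hy, h⟩ | ⟨hx, hy, h⟩)
      · exact Or.inl ⟨hy, hx, π.symm h⟩
      · exact Or.inr ⟨hy, hx, h.symm⟩
    · rintro x y z (⟨hx, hy, h⟩ | ⟨hx, hy, h⟩) (⟨hy', hz, h'⟩ | ⟨hy', hz, h'⟩)
      · exact Or.inl ⟨hx, hz, π.trans h h'⟩
      · exact absurd hy' hy
      · exact absurd hy hy'
      · exact Or.inr ⟨hx, hz, h.trans h'⟩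

/-- The free `ℚ`-vector space on the set of all set partitions of `Fin n`. -/
abbrev PMod (n : ℕ) : Type := Setoid (Fin n) →₀ ℚ

/-- The basis vector of `PMod n` corresponding to a set partition. -/
noncomputable def bp {n : ℕ} (π : Setoid (Fin n)) : PMod n := Finsupp.single π 1

/-- `V(n)`: the span of the noncrossing set partitions inside `PMod n`. -/
noncomputable def Vsub (n : ℕ) : Submodule ℚ (PMod n) :=
  Submodule.span ℚ (bp '' {π : Setoid (Fin n) | IsNC π})

/-- `V(n,k)`: the span of noncrossing set partitions with exactly `k` blocks. -/
noncomputable def VsubK (n k : ℕ) : Submodule ℚ (PMod n) :=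
  Submodule.span ℚ (bp '' {π : Setoid (Fin n) | IsNC π ∧ numBlocks π = k})

/-- `V(n,k,s)`: the span of noncrossing set partitions with exactly `k` blocks
and exactly `s` singleton blocks. -/
noncomputable def VsubKS (n k s : ℕ) : Submodule ℚ (PMod n) :=
  Submodule.span ℚ
    (bp '' {π : Setoid (Fin n) | IsNC π ∧ numBlocks π = k ∧ numSingletons π = s})

/-- The skein resolution of an (almost noncrossing) set partition `π` computed at the
crossing given by the adjacent pair `i`, `i'` (where `i'` is the successor of `i`):
`σ(π) = π₁ + π₂ - π₃ - π₄`, where `π₁ = s_i(π)`; `π₂` replaces the blocks of `i` and `i'`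
by `{i,i'}` and the union of the remainders; `π₃` keeps `B_{i'}(π) ∖ {i'}` as a block and
adjoins `i'` to the block of `i` (included only when `|B_{i'}(π)| ≥ 3`, i.e. `ℓ ≥ 2`);
`π₄` keeps `B_i(π) ∖ {i}` as a block and adjoins `i` to the block of `i'` (included only
when `|B_i(π)| ≥ 3`, i.e. `k ≥ 2`). -/
noncomputable def skeinAt {n : ℕ} (π : Setoid (Fin n)) (i i' : Fin n) : PMod n :=
  bp (permSP (Equiv.swap i i') π)
  + bp (replaceTwo π (block π i ∪ block π i') {i, i'})
  - (if 3 ≤ Nat.card (block π i') then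
      bp (replaceTwo π (block π i ∪ block π i') (block π i' \ {i'})) else 0)
  - (if 3 ≤ Nat.card (block π i) then
      bp (replaceTwo π (block π i ∪ block π i') (block π i \ {i})) else 0)

open Classical in
/-- The value of the skein operator `τ_i` on a (noncrossing) basis element. -/
noncomputable def tauFun {n : ℕ} (i i' : Fin n) (π : Setoid (Fin n)) : PMod n :=
  if block π i = block π i' then - bp π
  else if IsNC (permSP (Equiv.swap i i') π) then bp (permSP (Equiv.swap i i') π)
  else skeinAt (permSP (Equiv.swap i i') π) i i'

/-- The skein operator `τ_i` (for the adjacent pair `i`, `i'`), extended linearly. -/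
noncomputable def tau {n : ℕ} (i i' : Fin n) : PMod n →ₗ[ℚ] PMod n :=
  Finsupp.lift (PMod n) ℚ (Setoid (Fin n)) (tauFun i i')

open Classical in
/-- The value of the sign-twisted operator `ρ_i` on a basis element of `P(n)`:
`ρ_i(π) = s_i(π)` if `{i}` or `{i+1}` is a singleton block of `π`, and `-s_i(π)` otherwise. -/
noncomputable def rhoFun {n : ℕ} (i i' : Fin n) (π : Setoid (Fin n)) : PMod n :=
  if block π i = {i} ∨ block π i' = {i'} then bp (permSP (Equiv.swap i i') π)
  else - bp (permSP (Equiv.swap i i') π)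

/-- The operator `ρ_i` (for the adjacent pair `i`, `i'`), extended linearly to `P(n)`. -/
noncomputable def rho {n : ℕ} (i i' : Fin n) : PMod n →ₗ[ℚ] PMod n :=
  Finsupp.lift (PMod n) ℚ (Setoid (Fin n)) (rhoFun i i')

/-- Rotation of set partitions: `r(π) = c(π)` where `c = (1,2,…,n)` is the long cycle. -/
def rotate (n : ℕ) : Setoid (Fin n) → Setoid (Fin n) := fun π => permSP (finRotate n) π

/-- `[r]_q = 1 + q + ⋯ + q^{r-1}` as a polynomial with rational coefficients. -/
noncomputable def qnat (m : ℕ) : Polynomial ℚ := ∑ j ∈ Finset.range m, Polynomial.X ^ j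

/-- The `q`-factorial `[m]!_q`. -/
noncomputable def qfact : ℕ → Polynomial ℚ
  | 0 => 1
  | m + 1 => qnat (m + 1) * qfact m

end SkeinNC

namespace SkeinNC

/-- The noncrossing partition `π₀ ∈ NC(n,k,0)` with blocks (0-indexed)
`{0, 2k-1, 2k, …, n-1}, {1, 2k-2}, {2, 2k-3}, …, {k-1, k}`. -/
def pi0 (n k : ℕ) : Setoid (Fin n) :=
  Setoid.ker (fun x : Fin n =>
    if x.val = 0 ∨ 2 * k - 1 ≤ x.val then 0 else min x.val (2 * k - 1 - x.val))

/-- The noncrossing partition `π₁ ∈ NC(n,k,0)` with blocks (0-indexed)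
`{0, 1, …, n-2k+1}, {n-2k+2, n-2k+3}, …, {n-2, n-1}`. -/
def pi1 (n k : ℕ) : Setoid (Fin n) :=
  Setoid.ker (fun x : Fin n =>
    if x.val + 2 * k ≤ n + 1 then 0 else (x.val - (n - 2 * k)) / 2)

/-- The Young subgroup (as a finite set of permutations) attached to a labeling
`c : Fin n → ℕ`: all permutations preserving each fiber of `c`. -/
def youngFinset (n : ℕ) (c : Fin n → ℕ) : Finset (Equiv.Perm (Fin n)) :=
  Finset.univ.filter (fun w => ∀ x, c (w x) = c x)

/-- Labeling of `Fin n` whose fibers are the blocks (0-indexed consecutive intervals)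
of the Young subgroup `S_{μ'} ⊆ S_{n-1} ⊆ S_n`, where `μ' = (n-2k+2, 2^{k-2}, 1)` is the
conjugate of `μ = (k, k-1, 1^{n-2k})`: the interval `{0,…,n-2k+1}`, then the pairs
`{n-2k+2, n-2k+3}, …, {n-4, n-3}`, then the singletons `{n-2}` and `{n-1}`. -/
def muConjLabel (n k : ℕ) : Fin n → ℕ := fun x =>
  if x.val + 2 * k ≤ n + 1 then 0
  else if n - 2 ≤ x.val then x.val
  else 1 + (x.val - (n - 2 * k + 2)) / 2

/-- Labeling of `Fin n` whose fibers are the blocks of the Young subgroup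
`S_ν ⊆ S_{n-1} ⊆ S_n`, where `ν = (k, k, 1^{n-2k-1})`: the intervals `{0,…,k-1}` and
`{k,…,2k-1}`, and singletons elsewhere. -/
def nuLabel (n k : ℕ) : Fin n → ℕ := fun x =>
  if x.val < k then 0 else if x.val < 2 * k then 1 else x.val

end SkeinNC


-- generic permutation lemmas, independent of SkeinNC
namespace SkeinAux

open Equiv Finset

variable {n : ℕ}

/-- inversion count -/
def invc (w : Equiv.Perm (Fin n)) : ℕ :=
  (Finset.univ.filter (fun p : Fin n × Fin n => p.1 < p.2 ∧ w p.2 < w p.1)).card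

lemma swap_adj_lt {i i' a b : Fin n} (h : (i : ℕ) + 1 = i') (hab : a < b)
    (hne : ¬(a = i ∧ b = i')) : Equiv.swap i i' a < Equiv.swap i i' b := by
  have hab' : (a : ℕ) < (b : ℕ) := hab
  rcases eq_or_ne a i with rfl | hai
  · have hbi : b ≠ a := fun hb => absurd (congrArg Fin.val hb) (by omega)
    have hbi' : b ≠ i' := fun hb => hne ⟨rfl, hb⟩
    rw [Equiv.swap_apply_left, Equiv.swap_apply_of_ne_of_ne hbi hbi']
    have : (b : ℕ) ≠ (i' : ℕ) := fun hv => hbi' (Fin.ext hv)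
    rw [Fin.lt_def]; omega
  · rcases eq_or_ne a i' with rfl | hai'
    · have hbi : b ≠ i := by
        intro hb; rw [hb] at hab'; omega
      have hbi' : b ≠ a := fun hb => absurd (congrArg Fin.val hb) (by omega)
      rw [Equiv.swap_apply_right, Equiv.swap_apply_of_ne_of_ne hbi hbi']
      have : (b : ℕ) ≠ (i : ℕ) := fun hv => hbi (Fin.ext hv)
      rw [Fin.lt_def]; omega
    · rw [Equiv.swap_apply_of_ne_of_ne hai hai']
      have hvai : (a : ℕ) ≠ (i : ℕ) := fun hv => hai (Fin.ext hv)
      have hvai' : (a : ℕ) ≠ (i' : ℕ) := fun hv => hai' (Fin.ext hv)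
      rcases eq_or_ne b i with rfl | hbi
      · rw [Equiv.swap_apply_left, Fin.lt_def]; omega
      · rcases eq_or_ne b i' with rfl | hbi'
        · rw [Equiv.swap_apply_right, Fin.lt_def]; omega
        · rw [Equiv.swap_apply_of_ne_of_ne hbi hbi', Fin.lt_def]; omega

lemma invc_lt {w : Equiv.Perm (Fin n)} {i i' : Fin n} (h : (i : ℕ) + 1 = i')
    (hd : w i' < w i) : invc (w * Equiv.swap i i') < invc w := by
  classical
  have hii : i < i' := by simp [Fin.lt_def, ← h]
  have hmem : (i, i') ∈ (Finset.univ.filter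
      (fun p : Fin n × Fin n => p.1 < p.2 ∧ w p.2 < w p.1)) := by
    simp [hii, hd]
  have hcard : invc (w * Equiv.swap i i') ≤
      ((Finset.univ.filter
        (fun p : Fin n × Fin n => p.1 < p.2 ∧ w p.2 < w p.1)).erase (i, i')).card := by
    apply Finset.card_le_card_of_injOn (fun p => (Equiv.swap i i' p.1, Equiv.swap i i' p.2))
    · intro p hp
      replace hp : p ∈ Finset.univ.filter (fun p : Fin n × Fin n =>
          p.1 < p.2 ∧ (w * Equiv.swap i i') p.2 < (w * Equiv.swap i i') p.1) := hp
      replace hp := (Finset.mem_filter.mp hp).2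
      simp only [Equiv.Perm.mul_apply] at hp
      obtain ⟨h1, h2⟩ := hp
      have hnii : ¬(p.1 = i ∧ p.2 = i') := by
        rintro ⟨rfl, rfl⟩
        rw [Equiv.swap_apply_left, Equiv.swap_apply_right] at h2
        exact absurd h2 (not_lt.mpr hd.le)
      refine Finset.mem_erase.mpr ⟨?_, ?_⟩
      · intro hq
        have h1' : Equiv.swap i i' p.1 = i := congrArg Prod.fst hq
        have h2' : Equiv.swap i i' p.2 = i' := congrArg Prod.snd hq
        have e1 : p.1 = i' := by
          have := congrArg (Equiv.swap i i') h1'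
          simpa [Equiv.swap_apply_self, Equiv.swap_apply_left] using this
        have e2 : p.2 = i := by
          have := congrArg (Equiv.swap i i') h2'
          simpa [Equiv.swap_apply_self, Equiv.swap_apply_right] using this
        rw [e1, e2] at h1
        exact absurd (h1.trans hii) (lt_irrefl _)
      · simp only [mem_filter, mem_univ, true_and]
        exact ⟨swap_adj_lt h h1 hnii, h2⟩
    · intro p hp q hq hpq
      have e1 : Equiv.swap i i' p.1 = Equiv.swap i i' q.1 := congrArg Prod.fst hpq
      have e2 : Equiv.swap i i' p.2 = Equiv.swap i i' q.2 := congrArg Prod.snd hpq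
      exact Prod.ext ((Equiv.swap i i').injective e1) ((Equiv.swap i i').injective e2)
  calc invc (w * Equiv.swap i i') ≤ _ := hcard
    _ < _ := Finset.card_erase_lt_of_mem hmem

lemma eq_one_of_no_descent {w : Equiv.Perm (Fin n)}
    (h : ∀ (i i' : Fin n), (i : ℕ) + 1 = i' → w i < w i') : w = 1 := by
  cases n with
  | zero => exact Subsingleton.elim _ _
  | succ m =>
    have hsm : StrictMono w := by
      rw [Fin.strictMono_iff_lt_succ]
      intro i
      exact h _ _ (by simp)
    have : Subsingleton (Fin (m+1) ≃o Fin (m+1)) := inferInstance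
    let e : Fin (m+1) ≃o Fin (m+1) :=
      { toEquiv := w, map_rel_iff' := hsm.le_iff_le }
    have he : e = OrderIso.refl _ := Subsingleton.elim _ _
    ext x
    have := congrArg (fun (f : Fin (m+1) ≃o Fin (m+1)) => f x) he
    simpa [e] using congrArg Fin.val this

/-- the generating set of adjacent transpositions within fibers of `c` -/
def genSet (c : Fin n → ℕ) : Set (Equiv.Perm (Fin n)) :=
  {w | ∃ (i : Fin n) (hi : (i : ℕ) + 1 < n),
    c i = c ⟨(i : ℕ) + 1, hi⟩ ∧ w = Equiv.swap i ⟨(i : ℕ) + 1, hi⟩}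

theorem mem_closure_genSet {c : Fin n → ℕ} (hc : Monotone c) {w : Equiv.Perm (Fin n)}
    (hw : ∀ x, c (w x) = c x) : w ∈ Submonoid.closure (genSet c) := by
  classical
  suffices H : ∀ N (w : Equiv.Perm (Fin n)), invc w = N → (∀ x, c (w x) = c x) →
      w ∈ Submonoid.closure (genSet c) from H (invc w) w rfl hw
  intro N
  induction N using Nat.strong_induction_on with
  | _ N ih =>
    intro w hN hw
    by_cases hone : w = 1
    · subst hone; exact Submonoid.one_mem _
    · have hdesc : ∃ (i i' : Fin n), (i : ℕ) + 1 = (i' : ℕ) ∧ w i' < w i := by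
        by_contra hcon
        push_neg at hcon
        refine hone (eq_one_of_no_descent (fun i i' hii => ?_))
        rcases lt_or_eq_of_le (hcon i i' hii) with h | h
        · exact h
        · exact absurd (w.injective h) (by
            intro he
            have : (i : ℕ) = (i' : ℕ) := congrArg Fin.val he
            omega)
      obtain ⟨i, i', hii, hd⟩ := hdesc
      have hi' : (i : ℕ) + 1 < n := hii ▸ i'.isLt
      have hi'eq : i' = ⟨(i : ℕ) + 1, hi'⟩ := Fin.ext hii.symm
      -- c i = c i'
      have hci : c i = c i' := by
        have h1 : c i ≤ c i' := hc (le_of_lt (by simp [Fin.lt_def, ← hii]))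
        have h2 : c i' ≤ c i := by
          calc c i' = c (w i') := (hw i').symm
            _ ≤ c (w i) := hc hd.le
            _ = c i := hw i
        exact le_antisymm h1 h2
      have hsgen : Equiv.swap i i' ∈ genSet c := ⟨i, hi', by rw [← hi'eq]; exact hci, by rw [← hi'eq]⟩
      set u := w * Equiv.swap i i' with hu
      have hupres : ∀ x, c (u x) = c x := by
        intro x
        rw [hu, Equiv.Perm.mul_apply, hw]
        rcases eq_or_ne x i with rfl | hxi
        · rw [Equiv.swap_apply_left]; exact hci.symm
        · rcases eq_or_ne x i' with rfl | hxi'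
          · rw [Equiv.swap_apply_right]; exact hci
          · rw [Equiv.swap_apply_of_ne_of_ne hxi hxi']
      have hlt : invc u < N := hN ▸ invc_lt hii hd
      have humem := ih (invc u) hlt u rfl hupres
      have hw_eq : w = u * Equiv.swap i i' := by
        rw [hu, mul_assoc, Equiv.swap_mul_self, mul_one]
      rw [hw_eq]
      exact Submonoid.mul_mem _ humem (Submonoid.subset_closure hsgen)

end SkeinAux

namespace SkeinNC

open Equiv Finset

variable {n k : ℕ}

lemma permSP_swap_rel (i j x y : Fin n) (π : Setoid (Fin n)) :
    (permSP (Equiv.swap i j) π).r x y ↔ π.r (Equiv.swap i j x) (Equiv.swap i j y) := by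
  rw [permSP, Equiv.symm_swap]
  exact Iff.rfl

lemma permSP_swap_swap (i j : Fin n) (π : Setoid (Fin n)) :
    permSP (Equiv.swap i j) (permSP (Equiv.swap i j) π) = π := by
  apply Setoid.ext
  intro a b
  rw [show (permSP (Equiv.swap i j) (permSP (Equiv.swap i j) π)) a b ↔
      (permSP (Equiv.swap i j) (permSP (Equiv.swap i j) π)).r a b from Iff.rfl,
    permSP_swap_rel, permSP_swap_rel, Equiv.swap_apply_self, Equiv.swap_apply_self]

lemma mem_block_iff {π : Setoid (Fin n)} {x y : Fin n} : y ∈ block π x ↔ π.r x y := Iff.rfl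

lemma block_eq_iff {π : Setoid (Fin n)} {x y : Fin n} :
    block π x = block π y ↔ π.r x y := by
  constructor
  · intro h
    have hy : y ∈ block π y := π.refl y
    rw [← h] at hy
    exact hy
  · intro h
    ext z
    exact ⟨fun hz => π.trans (π.symm h) hz, fun hz => π.trans h hz⟩

lemma bp_apply_ne {π ρ : Setoid (Fin n)} (h : π ≠ ρ) : bp π ρ = 0 :=
  Finsupp.single_eq_of_ne' h

lemma tau_bp (i i' : Fin n) (π : Setoid (Fin n)) : tau i i' (bp π) = tauFun i i' π := by
  have h : (Finsupp.single π (1 : ℚ)).sum (fun x r => r • tauFun i i' x)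
      = (1 : ℚ) • tauFun i i' π := Finsupp.sum_single_index (zero_smul ℚ _)
  rw [tau, Finsupp.lift_apply, bp, h, one_smul]

lemma pi0_rel_iff {x y : Fin n} : (pi0 n k).r x y ↔
    (if (x : ℕ) = 0 ∨ 2 * k - 1 ≤ (x : ℕ) then 0 else min (x : ℕ) (2 * k - 1 - (x : ℕ)))
      = (if (y : ℕ) = 0 ∨ 2 * k - 1 ≤ (y : ℕ) then 0
          else min (y : ℕ) (2 * k - 1 - (y : ℕ))) := Iff.rfl

lemma pi1_rel_iff {x y : Fin n} : (pi1 n k).r x y ↔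
    (if (x : ℕ) + 2 * k ≤ n + 1 then 0 else ((x : ℕ) - (n - 2 * k)) / 2)
      = (if (y : ℕ) + 2 * k ≤ n + 1 then 0 else ((y : ℕ) - (n - 2 * k)) / 2) := Iff.rfl

lemma muConjLabel_eval (x : Fin n) : muConjLabel n k x =
    if (x : ℕ) + 2 * k ≤ n + 1 then 0
    else if n - 2 ≤ (x : ℕ) then (x : ℕ)
    else 1 + ((x : ℕ) - (n - 2 * k + 2)) / 2 := rfl

lemma nuLabel_eval (x : Fin n) : nuLabel n k x =
    if (x : ℕ) < k then 0 else if (x : ℕ) < 2 * k then 1 else (x : ℕ) := rfl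

lemma mono_muConjLabel (hk : 2 ≤ k) (hn : 2 * k < n) : Monotone (muConjLabel n k) := by
  intro x y hxy
  have hxy' : (x : ℕ) ≤ (y : ℕ) := hxy
  rw [muConjLabel_eval, muConjLabel_eval]
  split_ifs <;> omega

lemma mono_nuLabel (hk : 2 ≤ k) (hn : 2 * k < n) : Monotone (nuLabel n k) := by
  intro x y hxy
  have hxy' : (x : ℕ) ≤ (y : ℕ) := hxy
  rw [nuLabel_eval, nuLabel_eval]
  split_ifs <;> omega

lemma nu_gen_bounds (hk : 2 ≤ k) (hn : 2 * k < n) {i i' : Fin n} (hii : (i : ℕ) + 1 = (i' : ℕ))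
    (hc : nuLabel n k i = nuLabel n k i') : (i : ℕ) + 1 ≤ 2 * k - 1 ∧ (i : ℕ) ≠ k - 1 := by
  rw [nuLabel_eval, nuLabel_eval] at hc
  split_ifs at hc <;> omega

lemma mu_gen_rel (hk : 2 ≤ k) (hn : 2 * k < n) {i i' : Fin n} (hii : (i : ℕ) + 1 = (i' : ℕ))
    (hc : muConjLabel n k i = muConjLabel n k i') : (pi1 n k).r i i' := by
  rw [muConjLabel_eval, muConjLabel_eval] at hc
  rw [pi1_rel_iff]
  split_ifs at hc ⊢ <;> omega

lemma pi0_not_rel (hk : 2 ≤ k) (hn : 2 * k < n) {i i' : Fin n} (hii : (i : ℕ) + 1 = (i' : ℕ))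
    (hb : (i : ℕ) + 1 ≤ 2 * k - 1) (hne : (i : ℕ) ≠ k - 1) : ¬ (pi0 n k).r i i' := by
  rw [pi0_rel_iff]
  split_ifs <;> omega

lemma pi0_swap_not_NC (hk : 2 ≤ k) (hn : 2 * k < n) {i i' : Fin n}
    (hii : (i : ℕ) + 1 = (i' : ℕ)) (hb : (i : ℕ) + 1 ≤ 2 * k - 1) (hne : (i : ℕ) ≠ k - 1) :
    ¬ IsNC (permSP (Equiv.swap i i') (pi0 n k)) := by
  intro hNC
  have hi'v : (i' : ℕ) = (i : ℕ) + 1 := hii.symm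
  rcases lt_or_ge (i : ℕ) k with hcase | hcase
  · -- i ≤ k - 2
    have hik : (i : ℕ) ≤ k - 2 := by omega
    have hCn : 2 * k - 2 - (i : ℕ) < n := by omega
    have hDn : 2 * k - 1 - (i : ℕ) < n := by omega
    set C : Fin n := ⟨2 * k - 2 - (i : ℕ), hCn⟩ with hC
    set D : Fin n := ⟨2 * k - 1 - (i : ℕ), hDn⟩ with hD
    have hCv : (C : ℕ) = 2 * k - 2 - (i : ℕ) := rfl
    have hDv : (D : ℕ) = 2 * k - 1 - (i : ℕ) := rfl
    have hsC : Equiv.swap i i' C = C :=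
      Equiv.swap_apply_of_ne_of_ne (fun h => by have := congrArg Fin.val h; omega)
        (fun h => by have := congrArg Fin.val h; omega)
    have hsD : Equiv.swap i i' D = D :=
      Equiv.swap_apply_of_ne_of_ne (fun h => by have := congrArg Fin.val h; omega)
        (fun h => by have := congrArg Fin.val h; omega)
    have hrac : (permSP (Equiv.swap i i') (pi0 n k)).r i C := by
      rw [permSP_swap_rel, Equiv.swap_apply_left, hsC, pi0_rel_iff]
      split_ifs <;> omega
    have hrbd : (permSP (Equiv.swap i i') (pi0 n k)).r i' D := by
      rw [permSP_swap_rel, Equiv.swap_apply_right, hsD, pi0_rel_iff]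
      split_ifs <;> omega
    have hab : i < i' := by rw [Fin.lt_def]; omega
    have hbc : i' < C := by rw [Fin.lt_def]; omega
    have hcd : C < D := by rw [Fin.lt_def]; omega
    have := hNC i i' C D hab hbc hcd hrac hrbd
    rw [permSP_swap_rel, Equiv.swap_apply_left, Equiv.swap_apply_right, pi0_rel_iff] at this
    split_ifs at this <;> omega
  · -- k ≤ i ≤ 2k - 2
    have hAn : 2 * k - 2 - (i : ℕ) < n := by omega
    have hBn : 2 * k - 1 - (i : ℕ) < n := by omega
    set A : Fin n := ⟨2 * k - 2 - (i : ℕ), hAn⟩ with hA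
    set B : Fin n := ⟨2 * k - 1 - (i : ℕ), hBn⟩ with hB
    have hAv : (A : ℕ) = 2 * k - 2 - (i : ℕ) := rfl
    have hBv : (B : ℕ) = 2 * k - 1 - (i : ℕ) := rfl
    have hsA : Equiv.swap i i' A = A :=
      Equiv.swap_apply_of_ne_of_ne (fun h => by have := congrArg Fin.val h; omega)
        (fun h => by have := congrArg Fin.val h; omega)
    have hsB : Equiv.swap i i' B = B :=
      Equiv.swap_apply_of_ne_of_ne (fun h => by have := congrArg Fin.val h; omega)
        (fun h => by have := congrArg Fin.val h; omega)
    have hrac : (permSP (Equiv.swap i i') (pi0 n k)).r A i := by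
      rw [permSP_swap_rel, Equiv.swap_apply_left, hsA, pi0_rel_iff]
      split_ifs <;> omega
    have hrbd : (permSP (Equiv.swap i i') (pi0 n k)).r B i' := by
      rw [permSP_swap_rel, Equiv.swap_apply_right, hsB, pi0_rel_iff]
      split_ifs <;> omega
    have hab : A < B := by rw [Fin.lt_def]; omega
    have hbc : B < i := by rw [Fin.lt_def]; omega
    have hcd : i < i' := by rw [Fin.lt_def]; omega
    have := hNC A B i i' hab hbc hcd hrac hrbd
    rw [permSP_swap_rel, hsA, hsB, pi0_rel_iff] at this
    split_ifs at this <;> omega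

end SkeinNC

namespace SkeinNC

open Equiv Finset

variable {n k : ℕ}

lemma tauFun_coeff (hk : 2 ≤ k) (hn : 2 * k < n) {i i' : Fin n}
    (hii : (i : ℕ) + 1 = (i' : ℕ)) (hb : (i : ℕ) + 1 ≤ 2 * k - 1) (hne : (i : ℕ) ≠ k - 1)
    {π : Setoid (Fin n)} (hNC : IsNC π) :
    tauFun i i' π (pi0 n k) = bp π (pi0 n k) := by
  have hF1 : ¬ (pi0 n k).r i i' := pi0_not_rel hk hn hii hb hne
  have hF3 : ¬ IsNC (permSP (Equiv.swap i i') (pi0 n k)) := pi0_swap_not_NC hk hn hii hb hne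
  by_cases h1 : block π i = block π i'
  · have hpi : π ≠ pi0 n k := by rintro rfl; exact hF1 (block_eq_iff.mp h1)
    rw [tauFun, if_pos h1, Finsupp.neg_apply, bp_apply_ne hpi, neg_zero]
  · by_cases h2 : IsNC (permSP (Equiv.swap i i') π)
    · have hs : permSP (Equiv.swap i i') π ≠ pi0 n k := by
        intro he
        have hpe : π = permSP (Equiv.swap i i') (pi0 n k) := by
          rw [← he, permSP_swap_swap]
        exact hF3 (hpe ▸ hNC)
      have hpi : π ≠ pi0 n k := by rintro rfl; exact hF3 h2
      rw [tauFun, if_neg h1, if_pos h2, bp_apply_ne hs, bp_apply_ne hpi]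
    · rw [tauFun, if_neg h1, if_neg h2, skeinAt]
      set π' := permSP (Equiv.swap i i') π with hπ'
      have h1' : ¬ π'.r i i' := by
        intro h
        rw [hπ', permSP_swap_rel, Equiv.swap_apply_left, Equiv.swap_apply_right] at h
        exact h1 (block_eq_iff.mpr (π.symm h))
      have hSi : i ∈ block π' i ∪ block π' i' := Or.inl (π'.refl i)
      have hSi' : i' ∈ block π' i ∪ block π' i' := Or.inr (π'.refl i')
      have hrel2 : (replaceTwo π' (block π' i ∪ block π' i') {i, i'}).r i i' :=
        Or.inr ⟨hSi, hSi', iff_of_true (Set.mem_insert _ _) (Set.mem_insert_of_mem _ rfl)⟩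
      have hne2 : replaceTwo π' (block π' i ∪ block π' i') {i, i'} ≠ pi0 n k :=
        fun he => hF1 (he ▸ hrel2)
      have hrel3 : (replaceTwo π' (block π' i ∪ block π' i') (block π' i' \ {i'})).r i i' :=
        Or.inr ⟨hSi, hSi',
          iff_of_false (fun hC => h1' (π'.symm hC.1)) (fun hC => hC.2 rfl)⟩
      have hne3 : replaceTwo π' (block π' i ∪ block π' i') (block π' i' \ {i'}) ≠ pi0 n k :=
        fun he => hF1 (he ▸ hrel3)
      have hrel4 : (replaceTwo π' (block π' i ∪ block π' i') (block π' i \ {i})).r i i' :=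
        Or.inr ⟨hSi, hSi', iff_of_false (fun hC => hC.2 rfl) (fun hC => h1' hC.1)⟩
      have hne4 : replaceTwo π' (block π' i ∪ block π' i') (block π' i \ {i}) ≠ pi0 n k :=
        fun he => hF1 (he ▸ hrel4)
      have hfst : permSP (Equiv.swap i i') π' = π := by
        rw [hπ']; exact permSP_swap_swap i i' π
      rw [Finsupp.sub_apply, Finsupp.sub_apply, Finsupp.add_apply, hfst, bp_apply_ne hne2]
      have hit3 : (if 3 ≤ Nat.card (block π' i') then
          bp (replaceTwo π' (block π' i ∪ block π' i') (block π' i' \ {i'})) else 0)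
            (pi0 n k) = 0 := by
        split_ifs with h
        · exact bp_apply_ne hne3
        · rfl
      have hit4 : (if 3 ≤ Nat.card (block π' i) then
          bp (replaceTwo π' (block π' i ∪ block π' i') (block π' i \ {i})) else 0)
            (pi0 n k) = 0 := by
        split_ifs with h
        · exact bp_apply_ne hne4
        · rfl
      rw [hit3, hit4]
      ring

lemma tau_coeff_on_V (hk : 2 ≤ k) (hn : 2 * k < n) {i i' : Fin n}
    (hii : (i : ℕ) + 1 = (i' : ℕ)) (hb : (i : ℕ) + 1 ≤ 2 * k - 1) (hne : (i : ℕ) ≠ k - 1)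
    {u : PMod n} (hu : u ∈ VsubKS n k 0) : tau i i' u (pi0 n k) = u (pi0 n k) := by
  have hle : VsubKS n k 0 ≤ LinearMap.ker
      ((Finsupp.lapply (pi0 n k) : PMod n →ₗ[ℚ] ℚ).comp (tau i i')
        - (Finsupp.lapply (pi0 n k) : PMod n →ₗ[ℚ] ℚ)) := by
    rw [VsubKS]
    apply Submodule.span_le.mpr
    rintro _ ⟨π, hπ, rfl⟩
    simp only [SetLike.mem_coe, LinearMap.mem_ker, LinearMap.sub_apply, LinearMap.comp_apply,
      Finsupp.lapply_apply]
    rw [tau_bp, tauFun_coeff hk hn hii hb hne hπ.1, sub_self]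
  have hker := hle hu
  simp only [LinearMap.mem_ker, LinearMap.sub_apply, LinearMap.comp_apply,
    Finsupp.lapply_apply] at hker
  exact sub_eq_zero.mp hker

end SkeinNC

namespace SkeinNC

open Equiv Finset

variable {n k : ℕ}

lemma card_filter_val {P : ℕ → Prop} [DecidablePred P] :
    Fintype.card {x : Fin n // P (x : ℕ)} = ((Finset.range n).filter P).card := by
  rw [Fintype.card_subtype]
  apply Finset.card_bij (fun (a : Fin n) _ => (a : ℕ))
  · intro a ha
    rw [Finset.mem_filter, Finset.mem_range]
    exact ⟨a.isLt, (Finset.mem_filter.mp ha).2⟩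
  · intro a _ b _ h
    exact Fin.ext h
  · intro b hb
    rw [Finset.mem_filter, Finset.mem_range] at hb
    exact ⟨⟨b, hb.1⟩, Finset.mem_filter.mpr ⟨Finset.mem_univ _, hb.2⟩, rfl⟩

lemma young_card (c : Fin n → ℕ) :
    (youngFinset n c).card
      = ∏ v ∈ Finset.image c Finset.univ, (Fintype.card {a : Fin n // c a = v}).factorial := by
  classical
  have h1 : (youngFinset n c).card = Fintype.card {g : Equiv.Perm (Fin n) // c ∘ g = c} := by
    rw [youngFinset, ← Fintype.card_subtype]
    exact Fintype.card_congr (Equiv.subtypeEquivRight (fun g => by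
      rw [funext_iff]; exact Iff.rfl)).symm
  rw [h1, DomMulAct.stabilizer_card' c]

lemma mu_fiber_card (hk : 2 ≤ k) (hn : 2 * k < n) (v : ℕ) :
    Fintype.card {a : Fin n // muConjLabel n k a = v}
      = (((Finset.range n).filter (fun m =>
          (if m + 2 * k ≤ n + 1 then 0
            else if n - 2 ≤ m then m else 1 + (m - (n - 2 * k + 2)) / 2) = v))).card := by
  classical
  rw [← card_filter_val]
  exact Fintype.card_congr (Equiv.subtypeEquivRight (fun x => by rw [muConjLabel_eval]))

lemma mu_fiber0 (hk : 2 ≤ k) (hn : 2 * k < n) :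
    Fintype.card {a : Fin n // muConjLabel n k a = 0} = n - 2 * k + 2 := by
  classical
  rw [mu_fiber_card hk hn 0]
  have h : ((Finset.range n).filter (fun m =>
      (if m + 2 * k ≤ n + 1 then 0
        else if n - 2 ≤ m then m else 1 + (m - (n - 2 * k + 2)) / 2) = 0))
      = Finset.range (n - 2 * k + 2) := by
    ext m
    simp only [Finset.mem_filter, Finset.mem_range]
    split_ifs <;> omega
  rw [h, Finset.card_range]

lemma mu_fiber_n2 (hk : 2 ≤ k) (hn : 2 * k < n) :
    Fintype.card {a : Fin n // muConjLabel n k a = n - 2} = 1 := by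
  classical
  rw [mu_fiber_card hk hn (n - 2)]
  have h : ((Finset.range n).filter (fun m =>
      (if m + 2 * k ≤ n + 1 then 0
        else if n - 2 ≤ m then m else 1 + (m - (n - 2 * k + 2)) / 2) = n - 2))
      = {n - 2} := by
    ext m
    simp only [Finset.mem_filter, Finset.mem_range, Finset.mem_singleton]
    split_ifs <;> omega
  rw [h, Finset.card_singleton]

lemma mu_fiber_n1 (hk : 2 ≤ k) (hn : 2 * k < n) :
    Fintype.card {a : Fin n // muConjLabel n k a = n - 1} = 1 := by
  classical
  rw [mu_fiber_card hk hn (n - 1)]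
  have h : ((Finset.range n).filter (fun m =>
      (if m + 2 * k ≤ n + 1 then 0
        else if n - 2 ≤ m then m else 1 + (m - (n - 2 * k + 2)) / 2) = n - 1))
      = {n - 1} := by
    ext m
    simp only [Finset.mem_filter, Finset.mem_range, Finset.mem_singleton]
    split_ifs <;> omega
  rw [h, Finset.card_singleton]

lemma mu_fiber_pair (hk : 2 ≤ k) (hn : 2 * k < n) (j : ℕ) (hj : j < k - 2) :
    Fintype.card {a : Fin n // muConjLabel n k a = 1 + j} = 2 := by
  classical
  rw [mu_fiber_card hk hn (1 + j)]
  have h : ((Finset.range n).filter (fun m =>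
      (if m + 2 * k ≤ n + 1 then 0
        else if n - 2 ≤ m then m else 1 + (m - (n - 2 * k + 2)) / 2) = 1 + j))
      = {n - 2 * k + 2 + 2 * j, n - 2 * k + 3 + 2 * j} := by
    ext m
    simp only [Finset.mem_filter, Finset.mem_range, Finset.mem_insert, Finset.mem_singleton]
    split_ifs <;> omega
  rw [h]
  exact Finset.card_pair (by omega)

lemma muConjLabel_mk (m : ℕ) (h : m < n) : muConjLabel n k ⟨m, h⟩ =
    if m + 2 * k ≤ n + 1 then 0 else if n - 2 ≤ m then m
    else 1 + (m - (n - 2 * k + 2)) / 2 := rfl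

lemma mu_image (hk : 2 ≤ k) (hn : 2 * k < n) :
    Finset.image (muConjLabel n k) Finset.univ
      = insert 0 (insert (n - 2) (insert (n - 1)
          ((Finset.range (k - 2)).image (fun j => 1 + j)))) := by
  ext v
  simp only [Finset.mem_image, Finset.mem_univ, true_and, Finset.mem_insert, Finset.mem_range]
  constructor
  · rintro ⟨a, rfl⟩
    rw [muConjLabel_eval]
    split_ifs with h1 h2
    · exact Or.inl rfl
    · have hav : (a : ℕ) = n - 2 ∨ (a : ℕ) = n - 1 := by
        have := a.isLt; omega
      rcases hav with h | h
      · exact Or.inr (Or.inl h)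
      · exact Or.inr (Or.inr (Or.inl h))
    · refine Or.inr (Or.inr (Or.inr ⟨((a : ℕ) - (n - 2 * k + 2)) / 2, ?_, rfl⟩))
      have := a.isLt; omega
  · intro hv
    rcases hv with rfl | rfl | rfl | ⟨j, hj, rfl⟩
    · refine ⟨⟨0, by omega⟩, ?_⟩
      rw [muConjLabel_mk]
      split_ifs <;> omega
    · refine ⟨⟨n - 2, by omega⟩, ?_⟩
      rw [muConjLabel_mk]
      split_ifs <;> omega
    · refine ⟨⟨n - 1, by omega⟩, ?_⟩
      rw [muConjLabel_mk]
      split_ifs <;> omega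
    · refine ⟨⟨n - 2 * k + 2 + 2 * j, by omega⟩, ?_⟩
      rw [muConjLabel_mk]
      split_ifs <;> omega

end SkeinNC

namespace SkeinNC2dummy
end SkeinNC2dummy

namespace SkeinNC

open Equiv Finset

variable {n k : ℕ}

lemma card_young_mu (hk : 2 ≤ k) (hn : 2 * k < n) :
    (youngFinset n (muConjLabel n k)).card
      = 2 ^ (k - 2) * Nat.factorial (n - 2 * k + 2) := by
  classical
  rw [young_card, mu_image hk hn]
  have h0 : (0 : ℕ) ∉ insert (n - 2) (insert (n - 1)
      ((Finset.range (k - 2)).image (fun j => 1 + j))) := by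
    simp only [Finset.mem_insert, Finset.mem_image, Finset.mem_range, not_or]
    refine ⟨by omega, by omega, ?_⟩
    rintro ⟨j, hj, hje⟩
    omega
  have h1 : (n - 2 : ℕ) ∉ insert (n - 1) ((Finset.range (k - 2)).image (fun j => 1 + j)) := by
    simp only [Finset.mem_insert, Finset.mem_image, Finset.mem_range, not_or]
    refine ⟨by omega, ?_⟩
    rintro ⟨j, hj, hje⟩
    omega
  have h2 : (n - 1 : ℕ) ∉ (Finset.range (k - 2)).image (fun j => 1 + j) := by
    simp only [Finset.mem_image, Finset.mem_range]
    rintro ⟨j, hj, hje⟩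
    omega
  rw [Finset.prod_insert h0, Finset.prod_insert h1, Finset.prod_insert h2,
    Finset.prod_image (fun a _ b _ h => by omega)]
  rw [mu_fiber0 hk hn, mu_fiber_n2 hk hn, mu_fiber_n1 hk hn]
  have hp : ∏ j ∈ Finset.range (k - 2),
      (Fintype.card {a : Fin n // muConjLabel n k a = 1 + j}).factorial = 2 ^ (k - 2) := by
    rw [Finset.prod_congr rfl
      (fun j hj => by rw [mu_fiber_pair hk hn j (Finset.mem_range.mp hj)])]
    rw [Finset.prod_const, Finset.card_range]
    norm_num [Nat.factorial]
  rw [hp]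
  simp [Nat.factorial_one]
  ring

end SkeinNC

open SkeinNC in
/-- **Lemma (nonvanishing).** Let `n > 2k`, `k ≥ 2`, `μ = (k,k-1,1^{n-2k})` and
`ν = (k,k,1^{n-2k-1})` (partitions of `n-1`, with their Young subgroups regarded inside
`S_n`).  Then in the skein module `V(n,k,0)`:
`[S_{μ'}]₋ · π₁ = 2^{k-2} (n-2k+2)! ⬝ π₁ ≠ 0`, and `[S_ν]₊ · π₀ ≠ 0`. -/
theorem nonvanishing_lemma (n k : ℕ) (hk : 2 ≤ k) (hn : 2 * k < n)
    (φ : Equiv.Perm (Fin n) →* Module.End ℚ ↥(VsubKS n k 0))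
    (hφ : ∀ (i : Fin n) (hi : (i : ℕ) + 1 < n) (x : ↥(VsubKS n k 0)),
      ((φ (Equiv.swap i ⟨(i : ℕ) + 1, hi⟩) x : ↥(VsubKS n k 0)) : PMod n)
        = tau i ⟨(i : ℕ) + 1, hi⟩ (x : PMod n))
    (hm0 : bp (pi0 n k) ∈ VsubKS n k 0) (hm1 : bp (pi1 n k) ∈ VsubKS n k 0) :
    (∑ w ∈ youngFinset n (muConjLabel n k),
        ((Equiv.Perm.sign w : ℤ) : ℚ) • φ w ⟨bp (pi1 n k), hm1⟩)
      = ((2 ^ (k - 2) * Nat.factorial (n - 2 * k + 2) : ℚ))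
          • (⟨bp (pi1 n k), hm1⟩ : ↥(VsubKS n k 0)) ∧
    (∑ w ∈ youngFinset n (muConjLabel n k),
        ((Equiv.Perm.sign w : ℤ) : ℚ) • φ w ⟨bp (pi1 n k), hm1⟩) ≠ 0 ∧
    (∑ w ∈ youngFinset n (nuLabel n k), φ w ⟨bp (pi0 n k), hm0⟩) ≠ 0 := by
  classical
  have hsq : ∀ w : Equiv.Perm (Fin n),
      ((Equiv.Perm.sign w : ℤ) : ℚ) * ((Equiv.Perm.sign w : ℤ) : ℚ) = 1 := by
    intro w
    have h := Int.units_mul_self (Equiv.Perm.sign w)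
    have h2 : ((Equiv.Perm.sign w : ℤ) * (Equiv.Perm.sign w : ℤ)) = 1 := by
      rw [← Units.val_mul, h, Units.val_one]
    calc ((Equiv.Perm.sign w : ℤ) : ℚ) * ((Equiv.Perm.sign w : ℤ) : ℚ)
        = (((Equiv.Perm.sign w : ℤ) * (Equiv.Perm.sign w : ℤ) : ℤ) : ℚ) := by push_cast; ring
      _ = 1 := by rw [h2]; norm_num
  have hsign : ∀ w ∈ youngFinset n (muConjLabel n k),
      φ w ⟨bp (pi1 n k), hm1⟩
        = ((Equiv.Perm.sign w : ℤ) : ℚ) • (⟨bp (pi1 n k), hm1⟩ : VsubKS n k 0) := by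
    intro w hw
    have hwc : ∀ x, muConjLabel n k (w x) = muConjLabel n k x := (Finset.mem_filter.mp hw).2
    have hcl := SkeinAux.mem_closure_genSet (mono_muConjLabel hk hn) hwc
    refine Submonoid.closure_induction
      (motive := fun w _ => φ w ⟨bp (pi1 n k), hm1⟩
        = ((Equiv.Perm.sign w : ℤ) : ℚ) • (⟨bp (pi1 n k), hm1⟩ : VsubKS n k 0)) ?_ ?_ ?_ hcl
    · rintro w ⟨i, hi, hc, rfl⟩
      have hne : i ≠ ⟨(i : ℕ) + 1, hi⟩ := fun h => by
        have := congrArg Fin.val h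
        simp at this
      have hrel : (pi1 n k).r i ⟨(i : ℕ) + 1, hi⟩ := mu_gen_rel hk hn rfl hc
      have htf : tauFun i ⟨(i : ℕ) + 1, hi⟩ (pi1 n k) = - bp (pi1 n k) := by
        rw [tauFun, if_pos (block_eq_iff.mpr hrel)]
      have hcoe : ((φ (Equiv.swap i ⟨(i : ℕ) + 1, hi⟩) ⟨bp (pi1 n k), hm1⟩ :
          VsubKS n k 0) : PMod n) = - bp (pi1 n k) := by
        rw [hφ i hi ⟨bp (pi1 n k), hm1⟩]
        show tau i ⟨(i : ℕ) + 1, hi⟩ (bp (pi1 n k)) = _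
        rw [tau_bp, htf]
      have hsw : ((Equiv.Perm.sign (Equiv.swap i ⟨(i : ℕ) + 1, hi⟩) : ℤ) : ℚ) = -1 := by
        rw [Equiv.Perm.sign_swap hne]
        norm_num
      apply Subtype.ext
      rw [hcoe]
      simp only [SetLike.val_smul]
      rw [hsw, neg_smul, one_smul]
    · simp
    · intro x y hx hy px py
      rw [map_mul, Module.End.mul_apply, py, map_smul, px, smul_smul]
      have hmul : ((Equiv.Perm.sign (x * y) : ℤ) : ℚ)
          = ((Equiv.Perm.sign x : ℤ) : ℚ) * ((Equiv.Perm.sign y : ℤ) : ℚ) := by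
        rw [map_mul]
        push_cast
        ring
      rw [hmul, mul_comm]
  have hpart1 : (∑ w ∈ youngFinset n (muConjLabel n k),
      ((Equiv.Perm.sign w : ℤ) : ℚ) • φ w ⟨bp (pi1 n k), hm1⟩)
      = ((2 ^ (k - 2) * Nat.factorial (n - 2 * k + 2) : ℚ))
          • (⟨bp (pi1 n k), hm1⟩ : ↥(VsubKS n k 0)) := by
    have hterm : ∀ w ∈ youngFinset n (muConjLabel n k),
        ((Equiv.Perm.sign w : ℤ) : ℚ) • φ w ⟨bp (pi1 n k), hm1⟩
          = (⟨bp (pi1 n k), hm1⟩ : VsubKS n k 0) := by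
      intro w hw
      rw [hsign w hw, smul_smul, hsq w, one_smul]
    rw [Finset.sum_congr rfl hterm, Finset.sum_const,
      ← Nat.cast_smul_eq_nsmul ℚ, card_young_mu hk hn]
    congr 1
    push_cast
    ring
  have hne1 : (⟨bp (pi1 n k), hm1⟩ : VsubKS n k 0) ≠ 0 := by
    intro h
    have hzz : bp (pi1 n k) = 0 := congrArg Subtype.val h
    exact one_ne_zero (Finsupp.single_eq_zero.mp hzz)
  refine ⟨hpart1, ?_, ?_⟩
  · rw [hpart1]
    intro h0
    have hsc : ((2 : ℚ) ^ (k - 2) * (Nat.factorial (n - 2 * k + 2) : ℚ)) ≠ 0 := by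
      apply mul_ne_zero
      · positivity
      · exact_mod_cast (Nat.factorial_pos _).ne'
    rcases smul_eq_zero.mp h0 with h | h
    · exact hsc h
    · exact hne1 h
  · intro h0
    have hcoeff : ∀ w ∈ youngFinset n (nuLabel n k),
        ((φ w ⟨bp (pi0 n k), hm0⟩ : VsubKS n k 0) : PMod n) (pi0 n k) = 1 := by
      intro w hw
      have hwc : ∀ x, nuLabel n k (w x) = nuLabel n k x := (Finset.mem_filter.mp hw).2
      have hcl := SkeinAux.mem_closure_genSet (mono_nuLabel hk hn) hwc
      have hmain : ∀ v : VsubKS n k 0,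
          ((φ w v : VsubKS n k 0) : PMod n) (pi0 n k) = (v : PMod n) (pi0 n k) := by
        refine Submonoid.closure_induction (motive := fun w _ => ∀ v : VsubKS n k 0,
          ((φ w v : VsubKS n k 0) : PMod n) (pi0 n k) = (v : PMod n) (pi0 n k)) ?_ ?_ ?_ hcl
        · rintro w ⟨i, hi, hc, rfl⟩ v
          obtain ⟨hbnd, hnek⟩ := nu_gen_bounds hk hn rfl hc
          rw [hφ i hi v]
          exact tau_coeff_on_V hk hn rfl hbnd hnek v.2
        · intro v
          rw [map_one]
          rfl
        · intro x y hx hy px py v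
          rw [map_mul, Module.End.mul_apply, px, py]
      rw [hmain ⟨bp (pi0 n k), hm0⟩]
      show bp (pi0 n k) (pi0 n k) = 1
      rw [bp]
      exact Finsupp.single_eq_same
    have hone : (1 : Equiv.Perm (Fin n)) ∈ youngFinset n (nuLabel n k) := by
      rw [youngFinset, Finset.mem_filter]
      exact ⟨Finset.mem_univ _, fun x => rfl⟩
    have hval : (((∑ w ∈ youngFinset n (nuLabel n k), φ w ⟨bp (pi0 n k), hm0⟩) :
        VsubKS n k 0) : PMod n) (pi0 n k) = ((youngFinset n (nuLabel n k)).card : ℚ) := by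
      rw [AddSubmonoidClass.coe_finset_sum, Finsupp.finset_sum_apply,
        Finset.sum_congr rfl hcoeff, Finset.sum_const, nsmul_eq_mul, mul_one]
    rw [h0] at hval
    simp only [ZeroMemClass.coe_zero, Finsupp.zero_apply] at hval
    have hcpos : (youngFinset n (nuLabel n k)).card ≠ 0 :=
      Finset.card_ne_zero_of_mem hone
    exact hcpos (by exact_mod_cast hval.symm)
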